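/- Theorem (optimality of the standard penalty model): Among all QUBOs Q(x) = a + Σ_j b_j x_j + Σ_{j<k} c_{jk} x_j x_k on n ≥ r+1 variables with b_j ≥ -B and c_{jk} ≤ C for all j,k, vanishing on all bitstrings of Hamming weight r (r ≥ 1), the infimum of Q over bitstrings of weight ≠ r is at most min(B/(2r-1), C/2); moreover Q_r(x) = E·(r - Σ_j x_j)² with E = min(B/(2r-1), C/2) achieves this bound with equality. -/

import Mathlib

open Finset

private lemma ind_quad {n : ℕ} (c : Fin n → Fin n → ℝ) (S : Finset (Fin n)) :
    ∑ j, ∑ k, (if j < k then c j k * (if j ∈ S then (1:ℝ) else 0) * (if k ∈ S then (1:ℝ) else 0) else 0)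
      = ∑ j ∈ S, ∑ k ∈ S, (if j < k then c j k else 0) := by
  have step : ∀ j k : Fin n,
      (if j < k then c j k * (if j ∈ S then (1:ℝ) else 0) * (if k ∈ S then (1:ℝ) else 0) else 0)
      = (if j ∈ S then (if k ∈ S then (if j < k then c j k else 0) else 0) else 0) := by
    intro j k; split_ifs <;> ring
  simp only [step]
  rw [← Finset.sum_subset (Finset.subset_univ S) (by intro j _ hj; simp [hj])]
  apply Finset.sum_congr rfl
  intro j hj
  simp only [if_pos hj]
  rw [← Finset.sum_subset (Finset.subset_univ S) (by intro k _ hk; simp [hk])]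
  exact Finset.sum_congr rfl fun k hk => if_pos hk

private lemma quad_erase {n : ℕ} (c : Fin n → Fin n → ℝ) (S : Finset (Fin n))
    (i : Fin n) (hi : i ∈ S) :
    ∑ j ∈ S, ∑ k ∈ S, (if j < k then c j k else 0)
      = (∑ j ∈ S.erase i, ∑ k ∈ S.erase i, (if j < k then c j k else 0))
        + ∑ k ∈ S.erase i, (if i < k then c i k else c k i) := by
  have hsplit : ∀ f : Fin n → ℝ, ∑ j ∈ S, f j = f i + ∑ j ∈ S.erase i, f j :=
    fun f => (Finset.add_sum_erase S f hi).symm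
  rw [hsplit]
  have inner : ∀ j : Fin n, ∑ k ∈ S, (if j < k then c j k else 0)
      = (if j < i then c j i else 0) + ∑ k ∈ S.erase i, (if j < k then c j k else 0) :=
    fun j => hsplit _
  rw [inner, Finset.sum_congr rfl (fun j _ => inner j), Finset.sum_add_distrib]
  have hii : (if i < i then c i i else 0) = 0 := by simp
  have key : ∑ j ∈ S.erase i, ((if j < i then c j i else 0) + (if i < j then c i j else 0))
      = ∑ k ∈ S.erase i, (if i < k then c i k else c k i) := by
    apply Finset.sum_congr rfl
    intro j hj
    have hne : j ≠ i := Finset.ne_of_mem_erase hj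
    rcases lt_trichotomy j i with h | h | h
    · simp [h, not_lt_of_gt h]
    · exact absurd h hne
    · simp [h, not_lt_of_gt h]
  rw [← key, Finset.sum_add_distrib]
  rw [hii]; ring

private lemma bool_sum_nat {n : ℕ} (x : Fin n → ℝ) (hx : ∀ j, x j = 0 ∨ x j = 1) :
    ∃ m : ℕ, (∑ j, x j) = (m : ℝ) := by
  refine ⟨(Finset.univ.filter (fun j => x j = 1)).card, ?_⟩
  rw [show (∑ j, x j) = ∑ j, (if x j = 1 then (1:ℝ) else 0) from
    Finset.sum_congr rfl fun j _ => by rcases hx j with h | h <;> simp [h]]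
  simp [Finset.sum_boole]

theorem qubo_weight_r_optimality (n r : ℕ) (hr : 1 ≤ r) (hn : r + 1 ≤ n)
    (B C : ℝ) (hB : 0 < B) (hC : 0 < C)
    (E : ℝ) (hE : E = min (B / (2 * (r : ℝ) - 1)) (C / 2)) :
    -- (1) upper bound: every admissible QUBO vanishing on weight-r bitstrings
    -- has some bitstring of weight ≠ r with penalty at most E
    (∀ (a : ℝ) (b : Fin n → ℝ) (c : Fin n → Fin n → ℝ),
      (∀ j, -B ≤ b j) → (∀ j k, j < k → c j k ≤ C) →
      (∀ x : Fin n → ℝ, (∀ j, x j = 0 ∨ x j = 1) → (∑ j, x j) = (r : ℝ) →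
        a + (∑ j, b j * x j) +
          (∑ j, ∑ k, if j < k then c j k * x j * x k else 0) = 0) →
      ∃ x : Fin n → ℝ, (∀ j, x j = 0 ∨ x j = 1) ∧ (∑ j, x j) ≠ (r : ℝ) ∧
        a + (∑ j, b j * x j) +
          (∑ j, ∑ k, if j < k then c j k * x j * x k else 0) ≤ E) ∧
    -- (2) Q_r achieves this bound with equality
    ((∀ x : Fin n → ℝ, (∀ j, x j = 0 ∨ x j = 1) → (∑ j, x j) = (r : ℝ) →
        E * ((r : ℝ) - ∑ j, x j)^2 = 0) ∧
     (∀ x : Fin n → ℝ, (∀ j, x j = 0 ∨ x j = 1) → (∑ j, x j) ≠ (r : ℝ) →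
        E ≤ E * ((r : ℝ) - ∑ j, x j)^2) ∧
     (∃ x : Fin n → ℝ, (∀ j, x j = 0 ∨ x j = 1) ∧ (∑ j, x j) ≠ (r : ℝ) ∧
        E * ((r : ℝ) - ∑ j, x j)^2 = E)) := by
  have hr1 : (1:ℝ) ≤ (r:ℝ) := by exact_mod_cast hr
  have h2r : (0:ℝ) < 2 * (r:ℝ) - 1 := by linarith
  have hE0 : 0 < E := by
    rw [hE]; exact lt_min (div_pos hB h2r) (by linarith)
  -- a common weight-(r+1) set
  obtain ⟨T, -, hT⟩ := Finset.exists_subset_card_eq (s := (Finset.univ : Finset (Fin n))) (n := r + 1)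
    (by simpa using hn)
  have hTne : T.Nonempty := Finset.card_pos.mp (by omega)
  obtain ⟨i, hi⟩ := hTne
  -- indicator basics
  have indbool : ∀ S : Finset (Fin n), ∀ j, (if j ∈ S then (1:ℝ) else 0) = 0 ∨ (if j ∈ S then (1:ℝ) else 0) = 1 := by
    intro S j; by_cases h : j ∈ S <;> simp [h]
  have indsum : ∀ S : Finset (Fin n), ∑ j, (if j ∈ S then (1:ℝ) else 0) = (S.card : ℝ) := by
    intro S; simp
  constructor
  · -- part (1)
    intro a b c hb hc h0
    set e : Fin n → Fin n → ℝ := fun j k => if j < k then c j k else c k j with he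
    set QF : Finset (Fin n) → ℝ := fun S =>
      a + (∑ j ∈ S, b j) + (∑ j ∈ S, ∑ k ∈ S, (if j < k then c j k else 0)) with hQF
    have hQ : ∀ S : Finset (Fin n),
        a + (∑ j, b j * (if j ∈ S then (1:ℝ) else 0)) +
          (∑ j, ∑ k, if j < k then c j k * (if j ∈ S then (1:ℝ) else 0) * (if k ∈ S then (1:ℝ) else 0) else 0)
          = QF S := by
      intro S
      rw [ind_quad c S]
      simp [hQF, mul_ite]
    have hvanish : ∀ S : Finset (Fin n), S.card = r → QF S = 0 := by
      intro S hS
      rw [← hQ S]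
      exact h0 _ (indbool S) (by rw [indsum S, hS])
    have hQFerase : ∀ (S : Finset (Fin n)) (i : Fin n), i ∈ S →
        QF S = QF (S.erase i) + b i + ∑ k ∈ S.erase i, e i k := by
      intro S j hj
      simp only [hQF]
      rw [quad_erase c S j hj, ← Finset.add_sum_erase S b hj]
      simp only [he]
      ring
    by_contra hcon
    push_neg at hcon
    have hgt : ∀ S : Finset (Fin n), ((S.card : ℝ)) ≠ (r:ℝ) → E < QF S := by
      intro S hS
      have := hcon (fun j => if j ∈ S then (1:ℝ) else 0) (indbool S)
        (by rw [indsum S]; exact hS)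
      rwa [hQ S] at this
    have hcastT : ((T.card : ℝ)) ≠ (r : ℝ) := by rw [hT]; push_cast; linarith
    have ht : E < QF T := hgt T hcastT
    -- (*) QF T = b j + ∑_{k ∈ T.erase j} e j k  for j ∈ T
    have star : ∀ j ∈ T, QF T = b j + ∑ k ∈ T.erase j, e j k := by
      intro j hj
      have hc1 : (T.erase j).card = r := by rw [Finset.card_erase_of_mem hj, hT]; omega
      have := hQFerase T j hj
      rw [hvanish _ hc1] at this
      linarith
    have hTi : (T.erase i).card = r := by rw [Finset.card_erase_of_mem hi, hT]; omega
    have hTine : (T.erase i).Nonempty := Finset.card_pos.mp (by omega)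
    have hQTi : QF (T.erase i) = 0 := hvanish _ hTi
    -- weight-(r-1) values
    have hu : ∀ j ∈ T.erase i, QF ((T.erase i).erase j) = e j i - QF T := by
      intro j hj
      have hjT : j ∈ T := Finset.mem_of_mem_erase hj
      have hji : j ≠ i := Finset.ne_of_mem_erase hj
      have h1 := hQFerase (T.erase i) j hj
      rw [hQTi] at h1
      have h2 := star j hjT
      have hiTj : i ∈ T.erase j := Finset.mem_erase.mpr ⟨Ne.symm hji, hi⟩
      have h3 : ∑ k ∈ T.erase j, e j k = e j i + ∑ k ∈ (T.erase j).erase i, e j k :=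
        (Finset.add_sum_erase _ _ hiTj).symm
      rw [Finset.erase_right_comm] at h3
      rw [h3] at h2
      linarith
    have hcastU : ∀ j ∈ T.erase i, (((((T.erase i).erase j).card : ℕ) : ℝ)) ≠ (r:ℝ) := by
      intro j hj
      rw [Finset.card_erase_of_mem hj, hTi]
      have : r - 1 < r := by omega
      exact_mod_cast Nat.ne_of_lt this
    have hugt : ∀ j ∈ T.erase i, E < e j i - QF T := by
      intro j hj
      have := hgt _ (hcastU j hj)
      rwa [hu j hj] at this
    have esym : ∀ j ∈ T.erase i, e j i = e i j := by
      intro j hj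
      have hji : j ≠ i := Finset.ne_of_mem_erase hj
      rcases lt_trichotomy j i with h | h | h
      · simp [he, h, not_lt_of_gt h]
      · exact absurd h hji
      · simp [he, h, not_lt_of_gt h]
    have eC : ∀ j ∈ T.erase i, e j i ≤ C := by
      intro j hj
      have hji : j ≠ i := Finset.ne_of_mem_erase hj
      rcases lt_trichotomy j i with h | h | h
      · simpa [he, h] using hc j i h
      · exact absurd h hji
      · simpa [he, not_lt_of_gt h] using hc i j h
    -- sum bound
    have hbsum : ∑ k ∈ T.erase i, e i k ≤ QF T + B := by
      have := star i hi
      have := hb i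
      linarith
    have hsum2 : (r : ℝ) * (E + QF T) < ∑ k ∈ T.erase i, e i k := by
      have hlt : ∑ _k ∈ T.erase i, (E + QF T) < ∑ k ∈ T.erase i, e i k := by
        apply Finset.sum_lt_sum_of_nonempty hTine
        intro j hj
        have := hugt j hj
        rw [esym j hj] at this
        linarith
      rwa [Finset.sum_const, hTi, nsmul_eq_mul] at hlt
    have hB1 : E < B / (2 * (r:ℝ) - 1) := by
      rw [lt_div_iff₀ h2r]
      nlinarith
    have hC1 : E < C / 2 := by
      obtain ⟨j0, hj0⟩ := hTine
      have h1 := hugt j0 hj0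
      have h2 := eC j0 hj0
      linarith
    have : E < E := by
      have := lt_min hB1 hC1
      rwa [← hE] at this
    exact absurd this (lt_irrefl E)
  · refine ⟨?_, ?_, ?_⟩
    · intro x _ hsum
      rw [hsum, sub_self]
      ring
    · intro x hx hsum
      obtain ⟨m, hm⟩ := bool_sum_nat x hx
      rw [hm]
      rw [hm] at hsum
      have hmr : m ≠ r := fun h => hsum (by rw [h])
      have hsq : (1:ℝ) ≤ ((r:ℝ) - (m:ℝ))^2 := by
        rcases lt_or_gt_of_ne hmr with h | h
        · have : (m:ℝ) + 1 ≤ (r:ℝ) := by exact_mod_cast h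
          nlinarith
        · have : (r:ℝ) + 1 ≤ (m:ℝ) := by exact_mod_cast h
          nlinarith
      nlinarith
    · refine ⟨fun j => if j ∈ T then (1:ℝ) else 0, indbool T, ?_, ?_⟩
      · rw [indsum T, hT]; push_cast; linarith
      · rw [indsum T, hT]; push_cast; ring
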